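/- Let C₀ = (ρ²/16)·I ∈ R^{d×d} with 0 < ρ ≤ 1, and suppose vectors φ₁, …, φ_T ∈ R^d with ‖φ_i‖₂ ≤ 1 are added one at a time, forming C_i = C_{i−1} + φ_i φ_iᵀ, where each added vector satisfies φ_iᵀ C_{i−1}⁻¹ φ_i ≥ 1. Then 2^T · (ρ²/16)^d ≤ (T/d + ρ²/16)^d. -/

import Mathlib

open Matrix

lemma aux_vecMulVec_posSemidef {m : Type*} [Fintype m] (v : m → ℝ) :
    (vecMulVec v v).PosSemidef := by
  refine posSemidef_iff_dotProduct_mulVec.mpr ⟨?_, ?_⟩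
  · ext i j; simp [vecMulVec_apply, mul_comm]
  · intro x
    have h : star x ⬝ᵥ (vecMulVec v v) *ᵥ x = (v ⬝ᵥ x) * (v ⬝ᵥ x) := by
      show x ⬝ᵥ _ = _
      simp only [dotProduct, mulVec, vecMulVec_apply, Finset.mul_sum, Finset.sum_mul]
      rw [Finset.sum_comm]
      congr 1; ext i; congr 1; ext j; ring
    rw [h]; exact mul_self_nonneg _

lemma aux_det_step {d : ℕ} {A : Matrix (Fin d) (Fin d) ℝ} (hA : A.PosDef) (v : Fin d → ℝ) :
    (A + vecMulVec v v).det = A.det * (1 + v ⬝ᵥ A⁻¹ *ᵥ v) := by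
  rw [vecMulVec_eq (Fin 1), Matrix.det_add_replicateCol_mul_replicateRow hA.det_pos.ne'.isUnit]
  congr 1
  rw [show Matrix.replicateRow (Fin 1) v * A⁻¹ = Matrix.replicateRow (Fin 1) (v ᵥ* A⁻¹) from
    (Matrix.replicateRow_vecMul _ _).symm]
  simp [Matrix.det_unique, Matrix.replicateRow_mul_replicateCol_apply, ← Matrix.dotProduct_mulVec]

lemma aux_trace_vecMulVec {m : Type*} [Fintype m] (v : m → ℝ) :
    (vecMulVec v v).trace = ∑ j, v j ^ 2 := by
  simp [Matrix.trace, Matrix.diag, vecMulVec_apply, sq]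

lemma aux_det_le {d : ℕ} (hd : 0 < d) {A : Matrix (Fin d) (Fin d) ℝ} (hA : A.PosSemidef) :
    A.det ≤ (A.trace / d) ^ d := by
  have hev : ∀ i, 0 ≤ hA.1.eigenvalues i := hA.eigenvalues_nonneg
  have hdet : A.det = ∏ i, hA.1.eigenvalues i := by
    simpa using hA.1.det_eq_prod_eigenvalues
  have htr : A.trace = ∑ i, hA.1.eigenvalues i := by
    nth_rewrite 1 [hA.1.spectral_theorem]
    rw [Unitary.conjStarAlgAut_apply]
    rw [Matrix.trace_mul_cycle]
    rw [show (star (hA.1.eigenvectorUnitary : Matrix (Fin d) (Fin d) ℝ)) *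
      (hA.1.eigenvectorUnitary : Matrix (Fin d) (Fin d) ℝ) = 1 from hA.1.eigenvectorUnitary.2.1,
      Matrix.one_mul]
    simp [Matrix.trace_diagonal]
  have hgm := Real.geom_mean_le_arith_mean (Finset.univ : Finset (Fin d)) (fun _ => 1)
    hA.1.eigenvalues (fun i _ => zero_le_one) (by simp [hd]) (fun i _ => hev i)
  simp only [Real.rpow_one, one_mul, Finset.sum_const, Finset.card_univ, Fintype.card_fin,
    nsmul_eq_mul, mul_one] at hgm
  have hprod : (0:ℝ) ≤ ∏ i, hA.1.eigenvalues i := Finset.prod_nonneg fun i _ => hev i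
  have key : ∏ i, hA.1.eigenvalues i ≤ ((∑ i, hA.1.eigenvalues i) / d) ^ d := by
    have := pow_le_pow_left₀ (Real.rpow_nonneg hprod _) hgm d
    rwa [← Real.rpow_natCast ((∏ i, hA.1.eigenvalues i) ^ ((d:ℝ))⁻¹) d,
      ← Real.rpow_mul hprod, inv_mul_cancel₀ (by exact_mod_cast hd.ne'), Real.rpow_one] at this
  rw [hdet, htr]; exact key

theorem stmt_2 {d T : ℕ} (hd : 0 < d) (ρ : ℝ) (hρ0 : 0 < ρ) (hρ1 : ρ ≤ 1)
    (C : ℕ → Matrix (Fin d) (Fin d) ℝ) (φ : ℕ → Fin d → ℝ)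
    (hC0 : C 0 = (ρ ^ 2 / 16) • (1 : Matrix (Fin d) (Fin d) ℝ))
    (hφ : ∀ i < T, ∑ j, (φ i j) ^ 2 ≤ 1)
    (hrec : ∀ i < T, C (i + 1) = C i + vecMulVec (φ i) (φ i))
    (hbig : ∀ i < T, 1 ≤ φ i ⬝ᵥ (C i)⁻¹.mulVec (φ i)) :
    (2 : ℝ) ^ T * (ρ ^ 2 / 16) ^ d ≤ ((T : ℝ) / d + ρ ^ 2 / 16) ^ d := by
  set c : ℝ := ρ ^ 2 / 16 with hc
  have hc0 : 0 < c := by positivity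
  have key : ∀ i, i ≤ T → (C i).PosDef ∧ (C i).trace ≤ i + d * c ∧
      (2:ℝ) ^ i * c ^ d ≤ (C i).det := by
    intro i
    induction i with
    | zero =>
      intro _
      refine ⟨?_, ?_, ?_⟩
      · rw [hC0]
        refine posDef_iff_dotProduct_mulVec.mpr ⟨by simp [Matrix.IsHermitian], fun x hx => ?_⟩
        have : star x ⬝ᵥ (c • (1 : Matrix (Fin d) (Fin d) ℝ)) *ᵥ x = c * (x ⬝ᵥ x) := by
          show x ⬝ᵥ _ = _
          simp [Matrix.smul_mulVec, Matrix.one_mulVec, dotProduct_smul, smul_eq_mul]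
        rw [this]
        have hxx : 0 < x ⬝ᵥ x := by
          rcases Function.ne_iff.mp hx with ⟨j, hj⟩
          have : 0 < ∑ k, x k * x k :=
            Finset.sum_pos' (fun k _ => mul_self_nonneg _)
              ⟨j, Finset.mem_univ j, mul_self_pos.mpr hj⟩
          simpa [dotProduct] using this
        positivity
      · rw [hC0]
        simp [Matrix.trace_smul, Matrix.trace_one, smul_eq_mul]
        ring_nf
        simp [mul_comm]
      · rw [hC0, Matrix.det_smul, Matrix.det_one]
        simp
    | succ n ih =>
      intro hn1
      have hn : n < T := hn1
      obtain ⟨pd, tr, de⟩ := ih (le_of_lt hn)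
      rw [hrec n hn]
      refine ⟨pd.add_posSemidef (aux_vecMulVec_posSemidef _), ?_, ?_⟩
      · rw [Matrix.trace_add, aux_trace_vecMulVec]
        have := hφ n hn
        push_cast
        linarith
      · rw [aux_det_step pd]
        have hb := hbig n hn
        have hdet0 : 0 < (C n).det := pd.det_pos
        have h2 : (2:ℝ) ≤ 1 + φ n ⬝ᵥ (C n)⁻¹ *ᵥ φ n := by linarith
        calc (2:ℝ) ^ (n+1) * c ^ d = 2 * ((2:ℝ) ^ n * c ^ d) := by ring
        _ ≤ 2 * (C n).det := by nlinarith [pow_pos hc0 d, pow_pos (show (0:ℝ) < 2 by norm_num) n]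
        _ ≤ (C n).det * (1 + φ n ⬝ᵥ (C n)⁻¹ *ᵥ φ n) := by nlinarith
  obtain ⟨pd, tr, de⟩ := key T le_rfl
  have htr0 : 0 ≤ (C T).trace := by
    have hdiag : ∀ i, 0 < (C T) i i := by
      intro i
      have h := (posDef_iff_dotProduct_mulVec.mp pd).2 (x := Pi.single i (1:ℝ)) (Function.ne_iff.mpr ⟨i, by simp⟩)
      have he : star (Pi.single i (1:ℝ)) ⬝ᵥ (C T) *ᵥ Pi.single i 1 = (C T) i i := by
        show Pi.single i (1:ℝ) ⬝ᵥ _ = _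
        simp [Matrix.mulVec_single, dotProduct, Pi.single_apply]
      rwa [he] at h
    exact Finset.sum_nonneg fun i _ => (hdiag i).le
  have hle := aux_det_le hd pd.posSemidef
  have hdiv : (C T).trace / d ≤ (T : ℝ) / d + c := by
    rw [div_le_iff₀ (by exact_mod_cast hd)]
    have hd' : (0:ℝ) < d := by exact_mod_cast hd
    field_simp
    ring_nf
    nlinarith
  calc (2:ℝ) ^ T * c ^ d ≤ (C T).det := de
  _ ≤ ((C T).trace / d) ^ d := hle
  _ ≤ ((T : ℝ) / d + c) ^ d := pow_le_pow_left₀ (div_nonneg htr0 (by positivity)) hdiv d
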